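/- Let x, y ∈ ℂ^n with x ≠ 0, and let ε, δ ∈ (0,1). Set n₀ = ⌈9/ε²⌉ and m = ⌈6·log(2/δ)⌉. Let (i_{j,t}), for j ∈ [m], t ∈ [n₀], be i.i.d. indices drawn from the ℓ²-sampling distribution of x, and set z_{j,t} = conj(x_{i_{j,t}}) · y_{i_{j,t}} · ‖x‖²/|x_{i_{j,t}}|². Let Y_j = (1/n₀) Σ_t z_{j,t}, and let Y ∈ ℂ be formed by taking a median of the real parts of Y_1,…,Y_m as real part and a median of the imaginary parts as imaginary part. Then P(|Y − ⟨x, y⟩| ≤ ε·√2·‖x‖·‖y‖) ≥ 1 − δ, where ⟨x,y⟩ = Σ conj(x_i) y_i. -/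

import Mathlib

open MeasureTheory ProbabilityTheory Finset

section auxiliary

lemma sum_prod_pi {ι κ : Type*} [Fintype ι] [DecidableEq ι] [Fintype κ] (g : ι → κ → ℝ) :
    ∑ w : ι → κ, ∏ i, g i (w i) = ∏ i, ∑ s, g i s := by
  rw [Finset.prod_univ_sum, Fintype.piFinset_univ]

lemma prod_two_points {ι : Type*} [Fintype ι] [DecidableEq ι] {M : Type*} [CommMonoid M]
    {t t' : ι} (h : t ≠ t') (c : ι → M)
    (hc : ∀ u, u ≠ t → u ≠ t' → c u = 1) : ∏ u, c u = c t * c t' := by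
  have ht' : t' ∈ Finset.univ.erase t := by simp [Finset.mem_erase, h.symm]
  rw [← Finset.mul_prod_erase Finset.univ c (Finset.mem_univ t),
    ← Finset.mul_prod_erase (Finset.univ.erase t) c ht', ← mul_assoc]
  rw [Finset.prod_eq_one, mul_one]
  intro u hu
  simp only [Finset.mem_erase] at hu
  exact hc u hu.2.1 hu.1

section pisums
variable {ι κ : Type*} [Fintype ι] [DecidableEq ι] [Fintype κ] {pr : κ → ℝ}
  (h1 : ∑ s, pr s = 1)

include h1 in
lemma sum_prod_pi_cross {t t' : ι} (htt : t ≠ t') (d : κ → ℝ) :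
    ∑ w : ι → κ, (∏ u, pr (w u)) * (d (w t) * d (w t'))
      = (∑ s, pr s * d s) * (∑ s, pr s * d s) := by
  have key : ∀ w : ι → κ, (∏ u, pr (w u)) * (d (w t) * d (w t'))
      = ∏ u, (fun (u : ι) (s : κ) =>
          pr s * (if u = t then d s else if u = t' then d s else 1)) u (w u) := by
    intro w
    simp only
    rw [Finset.prod_mul_distrib]
    congr 1
    rw [prod_two_points htt (fun u => if u = t then d (w u) else if u = t' then d (w u) else 1)
      (by intro u h h'; simp [h, h'])]
    simp [htt, Ne.symm htt]
  rw [Finset.sum_congr rfl (fun w _ => key w)]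
  refine Eq.trans (sum_prod_pi
      (fun (u : ι) (s : κ) => pr s * (if u = t then d s else if u = t' then d s else 1))) ?_
  refine Eq.trans (prod_two_points htt
      (fun u => ∑ s, pr s * (if u = t then d s else if u = t' then d s else 1))
      (by intro u h h'; simp [h, h', h1])) ?_
  simp [htt, Ne.symm htt]

include h1 in
lemma sum_prod_pi_diag (t : ι) (d : κ → ℝ) :
    ∑ w : ι → κ, (∏ u, pr (w u)) * (d (w t) * d (w t))
      = ∑ s, pr s * (d s * d s) := by
  have key : ∀ w : ι → κ, (∏ u, pr (w u)) * (d (w t) * d (w t))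
      = ∏ u, (fun (u : ι) (s : κ) =>
          pr s * (if u = t then d s * d s else 1)) u (w u) := by
    intro w
    simp only
    rw [Finset.prod_mul_distrib]
    congr 1
    rw [Finset.prod_eq_single t (by intro u _ h; simp [h]) (by simp)]
    simp
  rw [Finset.sum_congr rfl (fun w _ => key w)]
  refine Eq.trans (sum_prod_pi
      (fun (u : ι) (s : κ) => pr s * (if u = t then d s * d s else 1))) ?_
  refine Eq.trans (Finset.prod_eq_single t (by intro u _ h; simp [h, h1]) (by simp)) ?_
  simp

include h1 in
lemma sum_prod_pi_one : ∑ w : ι → κ, (∏ u, pr (w u)) = 1 := by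
  have : ∀ w : ι → κ, (∏ u, pr (w u)) = ∏ u, (fun (_ : ι) (s : κ) => pr s) u (w u) :=
    fun w => rfl
  rw [Finset.sum_congr rfl (fun w _ => this w)]
  refine Eq.trans (sum_prod_pi (fun (_ : ι) (s : κ) => pr s)) ?_
  simp [h1]

include h1 in
lemma sum_prod_pi_sq (d : κ → ℝ) (hd : ∑ s, pr s * d s = 0) :
    ∑ w : ι → κ, (∏ u, pr (w u)) * (∑ t, d (w t))^2
      = (Fintype.card ι : ℝ) * ∑ s, pr s * (d s * d s) := by
  have expand : ∀ w : ι → κ, (∏ u, pr (w u)) * (∑ t, d (w t))^2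
      = ∑ t, ∑ t', (∏ u, pr (w u)) * (d (w t) * d (w t')) := by
    intro w
    rw [sq, Finset.sum_mul_sum, Finset.mul_sum]
    exact Finset.sum_congr rfl fun t _ => by rw [Finset.mul_sum]
  rw [Finset.sum_congr rfl (fun w _ => expand w), Finset.sum_comm]
  have inner : ∀ t t' : ι, ∑ w : ι → κ, (∏ u, pr (w u)) * (d (w t) * d (w t'))
      = if t = t' then ∑ s, pr s * (d s * d s) else 0 := by
    intro t t'
    by_cases h : t = t'
    · subst h; rw [sum_prod_pi_diag h1, if_pos rfl]
    · rw [sum_prod_pi_cross h1 h, hd, mul_zero, if_neg h]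
  calc ∑ t : ι, ∑ w : ι → κ, ∑ t' : ι, (∏ u, pr (w u)) * (d (w t) * d (w t'))
      = ∑ t : ι, ∑ t' : ι, ∑ w : ι → κ, (∏ u, pr (w u)) * (d (w t) * d (w t')) := by
        exact Finset.sum_congr rfl fun t _ => Finset.sum_comm
    _ = ∑ t : ι, ∑ t' : ι, (if t = t' then ∑ s, pr s * (d s * d s) else 0) := by
        exact Finset.sum_congr rfl fun t _ => Finset.sum_congr rfl fun t' _ => inner t t'
    _ = (Fintype.card ι : ℝ) * ∑ s, pr s * (d s * d s) := by
        simp only [Finset.sum_ite_eq, Finset.mem_univ, if_true, Finset.sum_const,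
          Finset.card_univ, nsmul_eq_mul]

end pisums

lemma var_le_aux {κ : Type*} [Fintype κ] (pr h : κ → ℝ) (h1 : ∑ s, pr s = 1)
    {M : ℝ} (hM : ∑ s, pr s * h s = M) :
    ∑ s, pr s * ((h s - M) * (h s - M)) ≤ ∑ s, pr s * (h s * h s) := by
  have expand : ∀ s, pr s * ((h s - M) * (h s - M))
      = pr s * (h s * h s) - 2 * M * (pr s * h s) + M^2 * pr s := by intro s; ring
  rw [Finset.sum_congr rfl fun s _ => expand s]
  rw [Finset.sum_add_distrib, Finset.sum_sub_distrib, ← Finset.mul_sum, ← Finset.mul_sum, hM, h1]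
  nlinarith [sq_nonneg M]

lemma chernoff_aux {E : Type*} [Fintype E] [DecidableEq E] (q : E → ℝ) (hq0 : ∀ e, 0 ≤ q e)
    (h1 : ∑ e, q e = 1) (Bad : Finset E) (hqB : ∑ e ∈ Bad, q e ≤ 1/9) (m : ℕ) :
    ∑ v ∈ univ.filter (fun v : Fin m → E =>
        (m:ℝ)/2 ≤ ((univ.filter fun j => v j ∈ Bad).card : ℝ)),
      ∏ j, q (v j) ≤ ((2:ℝ)/3)^m := by
  classical
  set W : E → ℝ := fun e => if e ∈ Bad then (4:ℝ) else 1 with hW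
  have hW1 : ∀ e, 1 ≤ W e := by
    intro e; by_cases h : e ∈ Bad <;> simp [hW, h] <;> norm_num
  have hprodW : ∀ v : Fin m → E,
      (m:ℝ)/2 ≤ ((univ.filter fun j => v j ∈ Bad).card : ℝ) →
      (2:ℝ)^m ≤ ∏ j, W (v j) := by
    intro v hv
    set N := (univ.filter fun j => v j ∈ Bad).card with hN
    have hprod : ∏ j, W (v j) = 4^N := by
      rw [hW]
      simp only
      rw [Finset.prod_ite (f := fun _ => (4:ℝ)) (g := fun _ => (1:ℝ))]
      simp [hN]
    have hmN : m ≤ 2 * N := by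
      have h2 : (m:ℝ) ≤ 2 * N := by linarith
      exact_mod_cast h2
    rw [hprod]
    calc (2:ℝ)^m ≤ 2^(2*N) := by apply pow_le_pow_right₀ (by norm_num) hmN
      _ = 4^N := by rw [pow_mul]; norm_num
  have step1 : ∑ v ∈ univ.filter (fun v : Fin m → E =>
        (m:ℝ)/2 ≤ ((univ.filter fun j => v j ∈ Bad).card : ℝ)), ∏ j, q (v j)
      ≤ ∑ v : Fin m → E, (∏ j, q (v j)) * ((∏ j, W (v j)) / 2^m) := by
    refine le_trans (Finset.sum_le_sum ?_) (Finset.sum_le_sum_of_subset_of_nonneg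
      (Finset.subset_univ _) ?_)
    · intro v hv
      simp only [Finset.mem_filter] at hv
      have h2 : (2:ℝ)^m ≤ ∏ j, W (v j) := hprodW v hv.2
      have hq : 0 ≤ ∏ j, q (v j) := Finset.prod_nonneg fun j _ => hq0 _
      have hge : (1:ℝ) ≤ (∏ j, W (v j)) / 2^m := by
        rw [le_div_iff₀ (by positivity)]; linarith
      nlinarith
    · intro v _ _
      have hq : 0 ≤ ∏ j, q (v j) := Finset.prod_nonneg fun j _ => hq0 _
      have hWp : 0 ≤ ∏ j, W (v j) := Finset.prod_nonneg fun j _ => le_trans zero_le_one (hW1 _)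
      positivity
  refine le_trans step1 ?_
  have e1 : ∑ v : Fin m → E, (∏ j, q (v j)) * ((∏ j, W (v j)) / 2^m)
      = (∑ v : Fin m → E, ∏ j, (q (v j) * W (v j))) / 2^m := by
    rw [Finset.sum_div]
    exact Finset.sum_congr rfl fun v _ => by rw [Finset.prod_mul_distrib]; ring
  have e2 : ∑ v : Fin m → E, ∏ j, (q (v j) * W (v j)) = (∑ e, q e * W e)^m := by
    refine Eq.trans (sum_prod_pi (fun (_ : Fin m) (e : E) => q e * W e)) ?_
    rw [Finset.prod_const, Finset.card_univ, Fintype.card_fin]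
  have e3 : ∑ e, q e * W e = 1 + 3 * ∑ e ∈ Bad, q e := by
    have : ∀ e, q e * W e = q e + (if e ∈ Bad then 3 * q e else 0) := by
      intro e; by_cases h : e ∈ Bad <;> simp [hW, h] <;> ring
    rw [Finset.sum_congr rfl fun e _ => this e, Finset.sum_add_distrib, h1,
      Finset.sum_ite_mem, Finset.univ_inter, Finset.mul_sum]
  rw [e1, e2, e3]
  have hb0 : (0:ℝ) ≤ 1 + 3 * ∑ e ∈ Bad, q e := by
    have : 0 ≤ ∑ e ∈ Bad, q e := Finset.sum_nonneg fun e _ => hq0 e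
    linarith
  have hb : (1 + 3 * ∑ e ∈ Bad, q e) ≤ 4/3 := by linarith
  calc (1 + 3 * ∑ e ∈ Bad, q e)^m / 2^m ≤ (4/3:ℝ)^m / 2^m := by
        apply div_le_div_of_nonneg_right ?_ (by positivity)
        · exact pow_le_pow_left₀ hb0 hb m
      _ = ((2:ℝ)/3)^m := by rw [← div_pow]; norm_num

lemma cheb_aux {κ : Type*} [Fintype κ] {pr : κ → ℝ} (hpr : ∀ s, 0 ≤ pr s)
    (h1 : ∑ s, pr s = 1) (d : κ → ℝ) (hd : ∑ s, pr s * d s = 0) (n₀ : ℕ) (hn₀ : 0 < n₀)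
    {c : ℝ} (hc : 0 < c)
    (hV9 : ∑ s, pr s * (d s * d s) ≤ (n₀ : ℝ) * (c * c) / 9) :
    ∑ w ∈ univ.filter (fun w : Fin n₀ → κ => c < |(1/(n₀:ℝ)) * ∑ t, d (w t)|),
      ∏ t, pr (w t) ≤ 1/9 := by
  classical
  set X : (Fin n₀ → κ) → ℝ := fun w => (1/(n₀:ℝ)) * ∑ t, d (w t) with hX
  set B := univ.filter (fun w : Fin n₀ → κ => c < |X w|) with hB
  have hq0 : ∀ w : Fin n₀ → κ, 0 ≤ ∏ t, pr (w t) := fun w => Finset.prod_nonneg fun t _ => hpr _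
  have h2 : (c * c) * ∑ w ∈ B, ∏ t, pr (w t) ≤ ∑ w ∈ B, (∏ t, pr (w t)) * (X w * X w) := by
    rw [Finset.mul_sum]
    refine Finset.sum_le_sum fun w hw => ?_
    simp only [hB, Finset.mem_filter] at hw
    have habs : c < |X w| := hw.2
    have hcc : c * c ≤ X w * X w := by
      have := abs_nonneg (X w)
      have h3 : c ≤ |X w| := le_of_lt habs
      nlinarith [abs_mul_abs_self (X w)]
    nlinarith [hq0 w]
  have h3 : ∑ w ∈ B, (∏ t, pr (w t)) * (X w * X w)
      ≤ ∑ w : Fin n₀ → κ, (∏ t, pr (w t)) * (X w * X w) := by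
    refine Finset.sum_le_sum_of_subset_of_nonneg (Finset.subset_univ _) fun w _ _ => ?_
    have := hq0 w
    nlinarith [mul_self_nonneg (X w)]
  have h4 : ∑ w : Fin n₀ → κ, (∏ t, pr (w t)) * (X w * X w)
      = (1/(n₀:ℝ))^2 * ((n₀ : ℝ) * ∑ s, pr s * (d s * d s)) := by
    have : ∀ w : Fin n₀ → κ, (∏ t, pr (w t)) * (X w * X w)
        = (1/(n₀:ℝ))^2 * ((∏ t, pr (w t)) * (∑ t, d (w t))^2) := by
      intro w; simp only [hX]; ring
    rw [Finset.sum_congr rfl fun w _ => this w, ← Finset.mul_sum,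
      sum_prod_pi_sq h1 d hd, Fintype.card_fin]
  have hn₀' : (0:ℝ) < (n₀ : ℝ) := by exact_mod_cast hn₀
  have h5 : (1/(n₀:ℝ))^2 * ((n₀ : ℝ) * ∑ s, pr s * (d s * d s)) ≤ (c * c) / 9 := by
    have he : (1/(n₀:ℝ))^2 * ((n₀ : ℝ) * ∑ s, pr s * (d s * d s))
        = (∑ s, pr s * (d s * d s)) / (n₀:ℝ) := by field_simp
    rw [he, div_le_div_iff₀ hn₀' (by norm_num : (0:ℝ) < 9)]
    nlinarith
  have hfinal : (c * c) * ∑ w ∈ B, ∏ t, pr (w t) ≤ (c * c) / 9 := by linarith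
  have hcc : (0:ℝ) < c * c := by positivity
  calc ∑ w ∈ B, ∏ t, pr (w t) = ((c*c) * ∑ w ∈ B, ∏ t, pr (w t)) / (c*c) := by field_simp
    _ ≤ ((c*c)/9) / (c*c) := by apply div_le_div_of_nonneg_right hfinal hcc.le
    _ = 1/9 := by field_simp

lemma bridge_aux {Ω : Type*} [MeasurableSpace Ω] (μ : Measure Ω) [IsProbabilityMeasure μ]
    {m n₀ n : ℕ} (idx : Fin m → Fin n₀ → Ω → Fin n)
    (hmeas : ∀ j t, Measurable (idx j t))
    (hindep : iIndepFun
      (fun jt : Fin m × Fin n₀ => idx jt.1 jt.2) μ)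
    (pr : Fin n → ℝ) (hpr : ∀ s, 0 ≤ pr s)
    (hdist : ∀ j t (s : Fin n), μ (idx j t ⁻¹' {s}) = ENNReal.ofReal (pr s))
    (Q : (Fin m → Fin n₀ → Fin n) → Prop) [DecidablePred Q] :
    μ {ω | Q (fun j t => idx j t ω)} =
      ENNReal.ofReal (∑ v ∈ univ.filter Q, ∏ j, ∏ t, pr (v j t)) := by
  classical
  set J : Ω → (Fin m → Fin n₀ → Fin n) := fun ω j t => idx j t ω with hJ
  have hcell : ∀ v : Fin m → Fin n₀ → Fin n, {ω | J ω = v} =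
      ⋂ jt : Fin m × Fin n₀, idx jt.1 jt.2 ⁻¹' {v jt.1 jt.2} := by
    intro v
    ext ω
    simp only [Set.mem_setOf_eq, Set.mem_iInter, Set.mem_preimage, Set.mem_singleton_iff, hJ,
      funext_iff, Prod.forall]
  have hcellmeas : ∀ v : Fin m → Fin n₀ → Fin n, MeasurableSet {ω | J ω = v} := by
    intro v
    rw [hcell]
    exact MeasurableSet.iInter fun jt => (hmeas _ _) (measurableSet_singleton _)
  have hμcell : ∀ v : Fin m → Fin n₀ → Fin n,
      μ {ω | J ω = v} = ENNReal.ofReal (∏ j, ∏ t, pr (v j t)) := by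
    intro v
    rw [hcell]
    rw [hindep.meas_iInter (fun jt => ⟨{v jt.1 jt.2}, measurableSet_singleton _, rfl⟩)]
    rw [Finset.prod_congr rfl (fun jt _ => hdist jt.1 jt.2 (v jt.1 jt.2))]
    rw [ENNReal.ofReal_prod_of_nonneg (fun j _ => Finset.prod_nonneg fun t _ => hpr _)]
    rw [Finset.prod_congr rfl (fun j _ => ENNReal.ofReal_prod_of_nonneg (fun t _ => hpr _))]
    exact Fintype.prod_prod_type' (f := fun j t => ENNReal.ofReal (pr (v j t)))
  have hdecomp : {ω | Q (J ω)} = ⋃ v ∈ univ.filter Q, {ω | J ω = v} := by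
    ext ω
    simp only [Set.mem_setOf_eq, Set.mem_iUnion, Finset.mem_filter, Finset.mem_univ, true_and]
    constructor
    · intro h; exact ⟨J ω, h, rfl⟩
    · rintro ⟨v, hv, rfl⟩; exact hv
  rw [hdecomp, measure_biUnion_finset ?_ (fun v _ => hcellmeas v)]
  · rw [Finset.sum_congr rfl fun v _ => hμcell v]
    exact (ENNReal.ofReal_sum_of_nonneg fun v _ =>
      Finset.prod_nonneg fun j _ => Finset.prod_nonneg fun t _ => hpr _).symm
  · intro v _ v' _ hvv'
    refine Set.disjoint_left.2 fun ω h h' => hvv' ?_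
    rw [← h, ← h']

lemma median_aux {m : ℕ} (g : Fin m → ℝ) (Yr Sr c : ℝ)
    (hle : ⌈(m:ℝ)/2⌉₊ ≤ (univ.filter (fun j => g j ≤ Yr)).card)
    (hge : ⌈(m:ℝ)/2⌉₊ ≤ (univ.filter (fun j => Yr ≤ g j)).card)
    (hbad : (univ.filter (fun j => c < |g j - Sr|)).card < ⌈(m:ℝ)/2⌉₊) :
    |Yr - Sr| ≤ c := by
  classical
  set k := ⌈(m:ℝ)/2⌉₊ with hk
  have hcard : (univ.filter (fun j : Fin m => c < |g j - Sr|)).card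
      + (univ.filter (fun j : Fin m => ¬ c < |g j - Sr|)).card = m := by
    rw [Finset.card_filter_add_card_filter_not]
    simp
  have key : ∀ (P : Fin m → Prop) (inst : DecidablePred P),
      k ≤ (@Finset.filter _ P inst univ).card → ∃ j, ¬ c < |g j - Sr| ∧ P j := by
    intro P _ hP
    have h := Finset.card_union_add_card_inter
      (univ.filter fun j : Fin m => ¬ c < |g j - Sr|) (univ.filter P)
    have hun : ((univ.filter fun j : Fin m => ¬ c < |g j - Sr|) ∪ univ.filter P).card ≤ m := by
      refine le_trans (Finset.card_le_univ _) ?_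
      simp
    have hpos : 1 ≤ ((univ.filter fun j : Fin m => ¬ c < |g j - Sr|) ∩ univ.filter P).card := by
      omega
    obtain ⟨j, hj⟩ := Finset.card_pos.1 hpos
    rw [Finset.mem_inter, Finset.mem_filter, Finset.mem_filter] at hj
    exact ⟨j, hj.1.2, hj.2.2⟩
  obtain ⟨j₁, hg₁, hle₁⟩ := key _ _ hle
  obtain ⟨j₂, hg₂, hge₂⟩ := key _ _ hge
  have h₁ := abs_le.1 (not_lt.1 hg₁)
  have h₂ := abs_le.1 (not_lt.1 hg₂)
  rw [abs_le]
  constructor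
  · linarith [h₁.1]
  · linarith [h₂.2]

end auxiliary

set_option maxHeartbeats 4000000 in
theorem stmt2 {Ω : Type*} [MeasurableSpace Ω] (μ : Measure Ω) [IsProbabilityMeasure μ]
    (n : ℕ) (x y : Fin n → ℂ) (hx : x ≠ 0)
    (ε δ : ℝ) (hε : ε ∈ Set.Ioo (0:ℝ) 1) (hδ : δ ∈ Set.Ioo (0:ℝ) 1)
    (n₀ m : ℕ) (hn₀ : n₀ = ⌈(9:ℝ) / ε ^ 2⌉₊) (hm : m = ⌈(6:ℝ) * Real.log (2 / δ)⌉₊)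
    (idx : Fin m → Fin n₀ → Ω → Fin n)
    (hmeas : ∀ j t, Measurable (idx j t))
    (hindep : iIndepFun
      (fun jt : Fin m × Fin n₀ => idx jt.1 jt.2) μ)
    (hdist : ∀ j t (s : Fin n),
      μ (idx j t ⁻¹' {s}) = ENNReal.ofReal (‖x s‖ ^ 2 / ∑ u, ‖x u‖ ^ 2))
    (z : Fin m → Fin n₀ → Ω → ℂ)
    (hz : ∀ j t ω, z j t ω = (starRingEnd ℂ) (x (idx j t ω)) * y (idx j t ω) *
      (((∑ u, ‖x u‖ ^ 2 : ℝ) : ℂ) / ((‖x (idx j t ω)‖ ^ 2 : ℝ) : ℂ)))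
    (Yg : Fin m → Ω → ℂ) (hYg : ∀ j ω, Yg j ω = (1 / (n₀ : ℂ)) * ∑ t, z j t ω)
    (Y : Ω → ℂ)
    (hrele : ∀ ω, ⌈(m : ℝ) / 2⌉₊ ≤ (univ.filter (fun j : Fin m => (Yg j ω).re ≤ (Y ω).re)).card)
    (hrege : ∀ ω, ⌈(m : ℝ) / 2⌉₊ ≤ (univ.filter (fun j : Fin m => (Y ω).re ≤ (Yg j ω).re)).card)
    (himle : ∀ ω, ⌈(m : ℝ) / 2⌉₊ ≤ (univ.filter (fun j : Fin m => (Yg j ω).im ≤ (Y ω).im)).card)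
    (himge : ∀ ω, ⌈(m : ℝ) / 2⌉₊ ≤ (univ.filter (fun j : Fin m => (Y ω).im ≤ (Yg j ω).im)).card) :
    ENNReal.ofReal (1 - δ) ≤
      μ {ω | ‖Y ω - ∑ s, (starRingEnd ℂ) (x s) * y s‖ ≤
        ε * Real.sqrt 2 * Real.sqrt (∑ s, ‖x s‖ ^ 2) * Real.sqrt (∑ s, ‖y s‖ ^ 2)} := by
  classical
  obtain ⟨hε0, hε1⟩ := hε
  obtain ⟨hδ0, hδ1⟩ := hδ
  -- basic numerics
  have hL : 0 < Real.log (2 / δ) := Real.log_pos (by rw [lt_div_iff₀ hδ0]; linarith)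
  have hm0 : 0 < m := by rw [hm]; exact Nat.ceil_pos.2 (by linarith)
  have hmR : (0:ℝ) < m := by exact_mod_cast hm0
  have hk1 : 1 ≤ ⌈(m:ℝ)/2⌉₊ := Nat.ceil_pos.2 (by linarith)
  have hn₀pos : 0 < n₀ := by
    rw [hn₀]; exact Nat.ceil_pos.2 (div_pos (by norm_num) (pow_pos hε0 2))
  have hn₀R : (0:ℝ) < (n₀:ℝ) := by exact_mod_cast hn₀pos
  have hn₀9 : (9:ℝ) ≤ (n₀:ℝ) * ε^2 := by
    have h1 : (9:ℝ)/ε^2 ≤ (n₀:ℝ) := by rw [hn₀]; exact Nat.le_ceil _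
    rw [div_le_iff₀ (by positivity)] at h1
    linarith
  have hmlog : (6:ℝ) * Real.log (2/δ) ≤ (m:ℝ) := by rw [hm]; exact Nat.le_ceil _
  have hratio : ((2:ℝ)/3)^m ≤ δ/2 := by
    have h23 : (2:ℝ)/3 ≤ Real.exp (-(1/3)) := by
      have hlog : Real.log (2/3) ≤ 2/3 - 1 := Real.log_le_sub_one_of_pos (by norm_num)
      calc (2:ℝ)/3 = Real.exp (Real.log (2/3)) := (Real.exp_log (by norm_num)).symm
        _ ≤ Real.exp (-(1/3)) := Real.exp_le_exp.2 (by linarith)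
    calc ((2:ℝ)/3)^m ≤ (Real.exp (-(1/3)))^m := pow_le_pow_left₀ (by norm_num) h23 m
      _ = Real.exp ((m:ℝ) * (-(1/3))) := by rw [Real.exp_nat_mul]
      _ ≤ Real.exp (-Real.log (2/δ)) := Real.exp_le_exp.2 (by linarith)
      _ = δ/2 := by
          rw [Real.exp_neg, Real.exp_log (by positivity), inv_div]
  -- notation
  set a := ∑ u, ‖x u‖ ^ 2 with ha_def
  set b := ∑ u, ‖y u‖ ^ 2 with hb_def
  set S := ∑ s, (starRingEnd ℂ) (x s) * y s with hS_def
  have ha : 0 < a := by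
    obtain ⟨s, hs⟩ := Function.ne_iff.1 hx
    have hs' : (0:ℝ) < ‖x s‖^2 := pow_pos (norm_pos_iff.mpr hs) 2
    exact Finset.sum_pos' (fun u _ => by positivity) ⟨s, Finset.mem_univ s, hs'⟩
  have hb0 : 0 ≤ b := Finset.sum_nonneg fun u _ => by positivity
  set pr : Fin n → ℝ := fun s => ‖x s‖^2 / a with hpr_def
  have hpr0 : ∀ s, 0 ≤ pr s := fun s => by positivity
  have hpr1 : ∑ s, pr s = 1 := by
    rw [hpr_def]
    simp only
    rw [← Finset.sum_div, ← ha_def]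
    exact div_self ha.ne'
  have hdist' : ∀ j t (s : Fin n), μ (idx j t ⁻¹' {s}) = ENNReal.ofReal (pr s) :=
    fun j t s => hdist j t s
  set f : Fin n → ℂ := fun s =>
    (starRingEnd ℂ) (x s) * y s * (((a : ℝ) : ℂ) / ((‖x s‖ ^ 2 : ℝ) : ℂ)) with hf_def
  have hzf : ∀ j t ω, z j t ω = f (idx j t ω) := hz
  set G : (Fin n₀ → Fin n) → ℂ := fun w => (1 / (n₀:ℂ)) * ∑ t, f (w t) with hG_def
  have hYgG : ∀ (j : Fin m) ω, Yg j ω = G (fun t => idx j t ω) := by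
    intro j ω
    rw [hYg j ω, hG_def]
    simp only
    congr 1
    exact Finset.sum_congr rfl fun t _ => hzf j t ω
  -- degenerate case y = 0
  by_cases hbz : b = 0
  · have hy : ∀ u, y u = 0 := by
      intro u
      have h0 : ∀ u ∈ (univ : Finset (Fin n)), (0:ℝ) ≤ ‖y u‖^2 := fun u _ => by positivity
      have hsum0 : ∑ u, ‖y u‖^2 = 0 := by rw [← hb_def]; exact hbz
      have h2 : ‖y u‖^2 = 0 := (Finset.sum_eq_zero_iff_of_nonneg h0).1 hsum0 u (Finset.mem_univ u)
      have h3 : ‖y u‖ = 0 := (pow_eq_zero_iff (two_ne_zero)).1 h2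
      exact norm_eq_zero.1 h3
    have hS0 : S = 0 := by
      rw [hS_def]
      exact Finset.sum_eq_zero fun s _ => by simp [hy s]
    have hYg0 : ∀ (j : Fin m) ω, Yg j ω = 0 := by
      intro j ω
      rw [hYg j ω]
      have : ∀ t ∈ (univ : Finset (Fin n₀)), z j t ω = 0 := by
        intro t _
        rw [hz j t ω, hy (idx j t ω)]; simp
      rw [Finset.sum_eq_zero this, mul_zero]
    have hY0 : ∀ ω, Y ω = 0 := by
      intro ω
      have hget : ∀ (P : Fin m → Prop) (inst : DecidablePred P),
          ⌈(m:ℝ)/2⌉₊ ≤ (@Finset.filter _ P inst univ).card → ∃ j, P j := by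
        intro P _ hP
        obtain ⟨j, hj⟩ := Finset.card_pos.1 (lt_of_lt_of_le hk1 hP)
        exact ⟨j, (Finset.mem_filter.1 hj).2⟩
      obtain ⟨j₁, h₁⟩ := hget _ _ (hrele ω)
      obtain ⟨j₂, h₂⟩ := hget _ _ (hrege ω)
      obtain ⟨j₃, h₃⟩ := hget _ _ (himle ω)
      obtain ⟨j₄, h₄⟩ := hget _ _ (himge ω)
      rw [hYg0 j₁ ω] at h₁
      rw [hYg0 j₂ ω] at h₂
      rw [hYg0 j₃ ω] at h₃
      rw [hYg0 j₄ ω] at h₄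
      simp only [Complex.zero_re, Complex.zero_im] at h₁ h₂ h₃ h₄
      apply Complex.ext <;> simp only [Complex.zero_re, Complex.zero_im] <;> linarith
    have hall : {ω | ‖Y ω - S‖ ≤
        ε * Real.sqrt 2 * Real.sqrt a * Real.sqrt b} = Set.univ := by
      apply Set.eq_univ_iff_forall.2
      intro ω
      simp only [Set.mem_setOf_eq, hY0 ω, hS0, sub_zero, map_zero, norm_zero]
      positivity
    rw [hall, measure_univ]
    exact ENNReal.ofReal_le_one.2 (by linarith)
  -- main case
  have hb : 0 < b := lt_of_le_of_ne hb0 (Ne.symm hbz)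
  set c := ε * Real.sqrt a * Real.sqrt b with hc_def
  have hc : 0 < c := by
    rw [hc_def]
    exact mul_pos (mul_pos hε0 (Real.sqrt_pos.2 ha)) (Real.sqrt_pos.2 hb)
  have hcc : c * c = ε^2 * a * b := by
    calc c * c = ε^2 * (Real.sqrt a * Real.sqrt a) * (Real.sqrt b * Real.sqrt b) := by
          rw [hc_def]; ring
      _ = ε^2 * a * b := by rw [Real.mul_self_sqrt ha.le, Real.mul_self_sqrt hb0]
  -- mean identities
  have hfS : ∀ s, ((pr s : ℝ) : ℂ) * f s = (starRingEnd ℂ) (x s) * y s := by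
    intro s
    by_cases hs : x s = 0
    · simp [hpr_def, hf_def, hs]
    · have habs : ‖x s‖ ≠ 0 := norm_ne_zero_iff.2 hs
      rw [hpr_def, hf_def]
      simp only
      push_cast
      field_simp [Complex.ofReal_ne_zero.2 habs, Complex.ofReal_ne_zero.2 ha.ne']
  have hSpr : ∑ s, ((pr s : ℝ):ℂ) * f s = S := by
    rw [hS_def]
    exact Finset.sum_congr rfl fun s _ => hfS s
  have hMre : ∑ s, pr s * (f s).re = S.re := by
    rw [← hSpr, Complex.re_sum]
    exact Finset.sum_congr rfl fun s _ => (Complex.re_ofReal_mul _ _).symm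
  have hMim : ∑ s, pr s * (f s).im = S.im := by
    rw [← hSpr, Complex.im_sum]
    exact Finset.sum_congr rfl fun s _ => (Complex.im_ofReal_mul _ _).symm
  have hsub0 : ∀ (h : Fin n → ℝ) (M : ℝ), (∑ s, pr s * h s = M) →
      ∑ s, pr s * (h s - M) = 0 := by
    intro h M hM
    have he : ∀ s, pr s * (h s - M) = pr s * h s - M * pr s := fun s => by ring
    rw [Finset.sum_congr rfl fun s _ => he s, Finset.sum_sub_distrib, hM, ← Finset.mul_sum, hpr1]
    ring
  have hdre0 : ∑ s, pr s * ((f s).re - S.re) = 0 := hsub0 _ _ hMre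
  have hdim0 : ∑ s, pr s * ((f s).im - S.im) = 0 := hsub0 _ _ hMim
  -- second moment bound
  have hnormSq : ∑ s, pr s * Complex.normSq (f s) ≤ a * b := by
    have per : ∀ s, pr s * Complex.normSq (f s) ≤ a * ‖y s‖^2 := by
      intro s
      by_cases hs : x s = 0
      · have hf0 : f s = 0 := by simp [hf_def, hs]
        rw [hf0, map_zero, mul_zero]
        positivity
      · have hx2 : (0:ℝ) < ‖x s‖^2 := pow_pos (norm_pos_iff.mpr hs) 2
        have habs : ‖x s‖ ≠ 0 := norm_ne_zero_iff.2 hs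
        have hfsq : Complex.normSq (f s) = ‖x s‖^2 * ‖y s‖^2 * (a / ‖x s‖^2)^2 := by
          rw [hf_def]
          simp only
          rw [map_mul, map_mul, Complex.normSq_conj, map_div₀, Complex.normSq_ofReal,
            Complex.normSq_ofReal]
          rw [Complex.normSq_eq_norm_sq, Complex.normSq_eq_norm_sq]
          field_simp [habs, ha.ne']
        rw [hfsq, hpr_def]
        simp only
        rw [show ‖x s‖^2/a * (‖x s‖^2 * ‖y s‖^2 * (a / ‖x s‖^2)^2) = a * ‖y s‖^2 by
          field_simp [habs, ha.ne']]
    calc ∑ s, pr s * Complex.normSq (f s) ≤ ∑ s, a * ‖y s‖^2 :=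
          Finset.sum_le_sum fun s _ => per s
      _ = a * b := by rw [← Finset.mul_sum, ← hb_def]
  have hVre : ∑ s, pr s * (((f s).re - S.re) * ((f s).re - S.re)) ≤ a * b := by
    refine le_trans (var_le_aux pr (fun s => (f s).re) hpr1 hMre) (le_trans ?_ hnormSq)
    refine Finset.sum_le_sum fun s _ => ?_
    rw [Complex.normSq_apply]
    exact mul_le_mul_of_nonneg_left (le_add_of_nonneg_right (mul_self_nonneg _)) (hpr0 s)
  have hVim : ∑ s, pr s * (((f s).im - S.im) * ((f s).im - S.im)) ≤ a * b := by
    refine le_trans (var_le_aux pr (fun s => (f s).im) hpr1 hMim) (le_trans ?_ hnormSq)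
    refine Finset.sum_le_sum fun s _ => ?_
    rw [Complex.normSq_apply]
    exact mul_le_mul_of_nonneg_left (le_add_of_nonneg_left (mul_self_nonneg _)) (hpr0 s)
  have hab9 : a * b ≤ (n₀:ℝ) * (c * c) / 9 := by
    rw [hcc]
    rw [le_div_iff₀ (by norm_num : (0:ℝ) < 9)]
    have h9 : 9 * (a*b) ≤ ((n₀:ℝ) * ε^2) * (a*b) :=
      mul_le_mul_of_nonneg_right hn₀9 (mul_pos ha hb).le
    linarith [h9]
  -- Chebyshev for each group
  have hqRe := cheb_aux hpr0 hpr1 (fun s => (f s).re - S.re) hdre0 n₀ hn₀pos hc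
    (le_trans hVre hab9)
  have hqIm := cheb_aux hpr0 hpr1 (fun s => (f s).im - S.im) hdim0 n₀ hn₀pos hc
    (le_trans hVim hab9)
  -- identify group means
  have hGre : ∀ w : Fin n₀ → Fin n,
      (G w).re - S.re = (1/(n₀:ℝ)) * ∑ t, ((f (w t)).re - S.re) := by
    intro w
    have h1 : (G w).re = (1/(n₀:ℝ)) * ∑ t, (f (w t)).re := by
      rw [hG_def]
      simp only
      rw [show (1/(n₀:ℂ)) = (((1/(n₀:ℝ)):ℝ):ℂ) by push_cast; ring]
      rw [Complex.re_ofReal_mul, Complex.re_sum]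
    rw [h1, Finset.sum_sub_distrib, Finset.sum_const, Finset.card_univ, Fintype.card_fin,
      nsmul_eq_mul]
    field_simp
  have hGim : ∀ w : Fin n₀ → Fin n,
      (G w).im - S.im = (1/(n₀:ℝ)) * ∑ t, ((f (w t)).im - S.im) := by
    intro w
    have h1 : (G w).im = (1/(n₀:ℝ)) * ∑ t, (f (w t)).im := by
      rw [hG_def]
      simp only
      rw [show (1/(n₀:ℂ)) = (((1/(n₀:ℝ)):ℝ):ℂ) by push_cast; ring]
      rw [Complex.im_ofReal_mul, Complex.im_sum]
    rw [h1, Finset.sum_sub_distrib, Finset.sum_const, Finset.card_univ, Fintype.card_fin,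
      nsmul_eq_mul]
    field_simp
  set BadRe : Finset (Fin n₀ → Fin n) :=
    univ.filter (fun w => c < |(G w).re - S.re|) with hBadRe_def
  set BadIm : Finset (Fin n₀ → Fin n) :=
    univ.filter (fun w => c < |(G w).im - S.im|) with hBadIm_def
  have hqRe' : ∑ w ∈ BadRe, ∏ t, pr (w t) ≤ 1/9 := by
    rw [hBadRe_def]
    rw [Finset.filter_congr (fun w _ => by rw [hGre w] : ∀ w ∈ (univ : Finset (Fin n₀ → Fin n)),
      (c < |(G w).re - S.re|) ↔ (c < |(1/(n₀:ℝ)) * ∑ t, ((f (w t)).re - S.re)|))]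
    exact hqRe
  have hqIm' : ∑ w ∈ BadIm, ∏ t, pr (w t) ≤ 1/9 := by
    rw [hBadIm_def]
    rw [Finset.filter_congr (fun w _ => by rw [hGim w] : ∀ w ∈ (univ : Finset (Fin n₀ → Fin n)),
      (c < |(G w).im - S.im|) ↔ (c < |(1/(n₀:ℝ)) * ∑ t, ((f (w t)).im - S.im)|))]
    exact hqIm
  have hq0E : ∀ w : Fin n₀ → Fin n, 0 ≤ ∏ t, pr (w t) :=
    fun w => Finset.prod_nonneg fun t _ => hpr0 _
  have hq1E : ∑ w : Fin n₀ → Fin n, ∏ t, pr (w t) = 1 := sum_prod_pi_one hpr1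
  -- Chernoff for the medians
  have hchRe := chernoff_aux (fun w : Fin n₀ → Fin n => ∏ t, pr (w t)) hq0E hq1E BadRe hqRe' m
  have hchIm := chernoff_aux (fun w : Fin n₀ → Fin n => ∏ t, pr (w t)) hq0E hq1E BadIm hqIm' m
  set QRe : (Fin m → Fin n₀ → Fin n) → Prop :=
    fun v => ⌈(m:ℝ)/2⌉₊ ≤ (univ.filter fun j => v j ∈ BadRe).card with hQRe_def
  set QIm : (Fin m → Fin n₀ → Fin n) → Prop :=
    fun v => ⌈(m:ℝ)/2⌉₊ ≤ (univ.filter fun j => v j ∈ BadIm).card with hQIm_def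
  have hsubfilter : ∀ (Bad : Finset (Fin n₀ → Fin n)),
      (univ.filter (fun v : Fin m → Fin n₀ → Fin n =>
        ⌈(m:ℝ)/2⌉₊ ≤ (univ.filter fun j => v j ∈ Bad).card)) ⊆
      (univ.filter (fun v : Fin m → Fin n₀ → Fin n =>
        (m:ℝ)/2 ≤ ((univ.filter fun j => v j ∈ Bad).card : ℝ))) := by
    intro Bad v hv
    simp only [Finset.mem_filter, Finset.mem_univ, true_and] at hv ⊢
    calc (m:ℝ)/2 ≤ (⌈(m:ℝ)/2⌉₊ : ℝ) := Nat.le_ceil _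
      _ ≤ ((univ.filter fun j => v j ∈ Bad).card : ℝ) := by exact_mod_cast hv
  have hμQ : ∀ (Bad : Finset (Fin n₀ → Fin n)),
      (∑ w ∈ Bad, ∏ t, pr (w t) ≤ 1/9) →
      μ {ω | ⌈(m:ℝ)/2⌉₊ ≤ (univ.filter fun j : Fin m =>
          (fun t => idx j t ω) ∈ Bad).card} ≤ ENNReal.ofReal (δ/2) := by
    intro Bad hBad
    have hbr := bridge_aux μ idx hmeas hindep pr hpr0 hdist'
      (fun v : Fin m → Fin n₀ → Fin n => ⌈(m:ℝ)/2⌉₊ ≤ (univ.filter fun j => v j ∈ Bad).card)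
    rw [hbr]
    refine ENNReal.ofReal_le_ofReal ?_
    refine le_trans (Finset.sum_le_sum_of_subset_of_nonneg (hsubfilter Bad) ?_) ?_
    · intro v _ _
      exact Finset.prod_nonneg fun j _ => Finset.prod_nonneg fun t _ => hpr0 _
    · exact le_trans (chernoff_aux (fun w : Fin n₀ → Fin n => ∏ t, pr (w t))
        hq0E hq1E Bad hBad m) hratio
  have hμRe := hμQ BadRe hqRe'
  have hμIm := hμQ BadIm hqIm'
  -- good event
  set A : Set Ω := {ω | ¬ ⌈(m:ℝ)/2⌉₊ ≤ (univ.filter fun j : Fin m =>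
      (fun t => idx j t ω) ∈ BadRe).card ∧ ¬ ⌈(m:ℝ)/2⌉₊ ≤ (univ.filter fun j : Fin m =>
      (fun t => idx j t ω) ∈ BadIm).card} with hA_def
  have hJmeas : Measurable (fun ω => (fun j t => idx j t ω : Fin m → Fin n₀ → Fin n)) :=
    measurable_pi_lambda _ fun j => measurable_pi_lambda _ fun t => hmeas j t
  have hAmeas : MeasurableSet A := by
    have : A = (fun ω => (fun j t => idx j t ω : Fin m → Fin n₀ → Fin n)) ⁻¹'
        {v | ¬ ⌈(m:ℝ)/2⌉₊ ≤ (univ.filter fun j : Fin m => v j ∈ BadRe).card ∧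
          ¬ ⌈(m:ℝ)/2⌉₊ ≤ (univ.filter fun j : Fin m => v j ∈ BadIm).card} := rfl
    rw [this]
    exact hJmeas ((Set.to_countable _).measurableSet)
  have hAc : μ Aᶜ ≤ ENNReal.ofReal δ := by
    have hsub : Aᶜ ⊆ {ω | ⌈(m:ℝ)/2⌉₊ ≤ (univ.filter fun j : Fin m =>
        (fun t => idx j t ω) ∈ BadRe).card} ∪ {ω | ⌈(m:ℝ)/2⌉₊ ≤ (univ.filter fun j : Fin m =>
        (fun t => idx j t ω) ∈ BadIm).card} := by
      intro ω hω
      rw [hA_def] at hω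
      simp only [Set.mem_compl_iff, Set.mem_setOf_eq, not_and_or, not_not] at hω
      rcases hω with h | h
      · exact Or.inl h
      · exact Or.inr h
    refine le_trans (measure_mono hsub) (le_trans (measure_union_le _ _) ?_)
    refine le_trans (add_le_add hμRe hμIm) ?_
    rw [← ENNReal.ofReal_add (by linarith) (by linarith)]
    norm_num
  have hA1 : ENNReal.ofReal (1 - δ) ≤ μ A := by
    have htot : μ A + μ Aᶜ = 1 := by rw [measure_add_measure_compl hAmeas, measure_univ]
    have h1 : ENNReal.ofReal (1-δ) + ENNReal.ofReal δ = 1 := by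
      rw [← ENNReal.ofReal_add (by linarith) hδ0.le]
      norm_num
    have h2 : ENNReal.ofReal (1-δ) + ENNReal.ofReal δ ≤ μ A + ENNReal.ofReal δ := by
      rw [h1, ← htot]
      exact add_le_add le_rfl hAc
    exact (ENNReal.add_le_add_iff_right ENNReal.ofReal_ne_top).1 h2
  refine le_trans hA1 (measure_mono ?_)
  -- A ⊆ target
  intro ω hω
  rw [hA_def] at hω
  simp only [Set.mem_setOf_eq] at hω
  obtain ⟨hRe, hIm⟩ := hω
  have hfiltRe : (univ.filter fun j : Fin m => (fun t => idx j t ω) ∈ BadRe)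
      = univ.filter (fun j : Fin m => c < |(Yg j ω).re - S.re|) := by
    refine Finset.filter_congr fun j _ => ?_
    rw [hBadRe_def]
    simp only [Finset.mem_filter, Finset.mem_univ, true_and]
    rw [hYgG j ω]
  have hfiltIm : (univ.filter fun j : Fin m => (fun t => idx j t ω) ∈ BadIm)
      = univ.filter (fun j : Fin m => c < |(Yg j ω).im - S.im|) := by
    refine Finset.filter_congr fun j _ => ?_
    rw [hBadIm_def]
    simp only [Finset.mem_filter, Finset.mem_univ, true_and]
    rw [hYgG j ω]
  rw [hfiltRe] at hRe
  rw [hfiltIm] at hIm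
  have hmedRe : |(Y ω).re - S.re| ≤ c :=
    median_aux (fun j => (Yg j ω).re) (Y ω).re S.re c (hrele ω) (hrege ω) (not_le.1 hRe)
  have hmedIm : |(Y ω).im - S.im| ≤ c :=
    median_aux (fun j => (Yg j ω).im) (Y ω).im S.im c (himle ω) (himge ω) (not_le.1 hIm)
  simp only [Set.mem_setOf_eq]
  have hre2 := abs_le.1 hmedRe
  have him2 := abs_le.1 hmedIm
  have habs2 : ‖Y ω - S‖^2 ≤ 2 * (c * c) := by
    rw [Complex.sq_norm, Complex.normSq_apply, Complex.sub_re, Complex.sub_im]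
    have hr : ((Y ω).re - S.re) * ((Y ω).re - S.re) ≤ c * c := by
      rw [← abs_mul_abs_self]
      exact mul_le_mul hmedRe hmedRe (abs_nonneg _) hc.le
    have hi : ((Y ω).im - S.im) * ((Y ω).im - S.im) ≤ c * c := by
      rw [← abs_mul_abs_self]
      exact mul_le_mul hmedIm hmedIm (abs_nonneg _) hc.le
    linarith [hr, hi]
  have hRHS : ε * Real.sqrt 2 * Real.sqrt a * Real.sqrt b
      = Real.sqrt 2 * c := by rw [hc_def]; ring
  have hRHS2 : (ε * Real.sqrt 2 * Real.sqrt a * Real.sqrt b)^2 = 2 * (c * c) := by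
    rw [hRHS]
    rw [show (Real.sqrt 2 * c)^2 = (Real.sqrt 2 * Real.sqrt 2) * (c * c) by ring]
    rw [Real.mul_self_sqrt (by norm_num)]
  have habs0 : 0 ≤ ‖Y ω - S‖ := norm_nonneg _
  have hRHS0 : 0 ≤ ε * Real.sqrt 2 * Real.sqrt a * Real.sqrt b :=
    mul_nonneg (mul_nonneg (mul_nonneg hε0.le (Real.sqrt_nonneg 2)) (Real.sqrt_nonneg a))
      (Real.sqrt_nonneg b)
  calc ‖Y ω - S‖ = Real.sqrt (‖Y ω - S‖^2) :=
        (Real.sqrt_sq habs0).symm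
    _ ≤ Real.sqrt ((ε * Real.sqrt 2 * Real.sqrt a * Real.sqrt b)^2) :=
        Real.sqrt_le_sqrt (by rw [hRHS2]; exact habs2)
    _ = ε * Real.sqrt 2 * Real.sqrt a * Real.sqrt b := Real.sqrt_sq hRHS0
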